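/- Right continuity of the Stein exponent: the function ε ↦ B(ε), defined as the supremum over test sequences T with limsup_n α_n[T_n] ≤ ε of liminf_n −(1/n) log β_n[T_n], satisfies B(ε) = inf_{ε' > ε} B(ε') for every ε ∈ [0,1), and the supremum in the definition of B(ε) is attained by some test sequence. -/

import Mathlib

open Filter

/-- The liminf exponential rate `liminf -(1/n) log p n`, with the convention
that the exponent is `+∞` when `p n = 0` (i.e. `log 0 = -∞`). -/
noncomputable def liminfExpRate (p : ℕ → ℝ) : EReal :=
  Filter.liminf (fun n => if p n = 0 then (⊤ : EReal)
    else ((-(1 / (n : ℝ)) * Real.log (p n) : ℝ) : EReal)) Filter.atTop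

/-- The limsup exponential rate `limsup -(1/n) log p n`, with the convention
that the exponent is `+∞` when `p n = 0`. -/
noncomputable def limsupExpRate (p : ℕ → ℝ) : EReal :=
  Filter.limsup (fun n => if p n = 0 then (⊤ : EReal)
    else ((-(1 / (n : ℝ)) * Real.log (p n) : ℝ) : EReal)) Filter.atTop

/-- Right continuity of the Stein exponent `B(ε)` and attainment of the supremum
in its definition, in the abstract hypothesis-testing setting. -/
theorem B_right_continuous_and_attained {Test : ℕ → Type*}
    (αf βf : ∀ n, Test n → ℝ)
    (hα : ∀ n T, αf n T ∈ Set.Icc (0 : ℝ) 1) (hβ : ∀ n T, 0 ≤ βf n T)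
    (hI : ∀ n, ∃ T, αf n T = 0)
    (B : ℝ → EReal)
    (hB : ∀ ε, B ε = sSup {z : EReal | ∃ T : ∀ n, Test n,
        Filter.limsup (fun n => αf n (T n)) Filter.atTop ≤ ε ∧
        z = liminfExpRate (fun n => βf n (T n))})
    (ε : ℝ) (hε0 : 0 ≤ ε) (hε1 : ε < 1) :
    (B ε = ⨅ ε' ∈ Set.Ioi ε, B ε') ∧
    ∃ T : ∀ n, Test n,
      Filter.limsup (fun n => αf n (T n)) Filter.atTop ≤ ε ∧
      liminfExpRate (fun n => βf n (T n)) = B ε := by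
  classical
  set Iinf : EReal := ⨅ ε' ∈ Set.Ioi ε, B ε' with hIinf
  -- monotonicity of B
  have hmono : ∀ a b : ℝ, a ≤ b → B a ≤ B b := by
    intro a b hab
    rw [hB a, hB b]
    refine sSup_le_sSup ?_
    rintro z ⟨T, h1, h2⟩
    exact ⟨T, h1.trans hab, h2⟩
  have hBle : B ε ≤ Iinf := le_iInf₂ fun ε' hε' => hmono _ _ (le_of_lt hε')
  -- an approximating sequence from below for Iinf
  obtain ⟨c, hc_mono, hc_sup, hc_lt, hc_bot⟩ :
      ∃ c : ℕ → EReal, Monotone c ∧ Iinf ≤ ⨆ j, c j ∧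
        (Iinf ≠ ⊥ → ∀ j, c j < Iinf) ∧ (Iinf = ⊥ → ∀ j, c j = ⊥) := by
    rcases eq_or_ne Iinf ⊥ with hb | hb
    · exact ⟨fun _ => ⊥, monotone_const, by simp [hb], fun h => absurd hb h, fun _ _ => rfl⟩
    rcases eq_or_ne Iinf ⊤ with ht | ht
    · refine ⟨fun j => ((j : ℝ) : EReal), ?_, ?_, ?_, fun h => absurd h hb⟩
      · intro a b hab
        exact EReal.coe_le_coe_iff.2 (by exact_mod_cast hab)
      · rw [ht]
        refine top_le_iff.2 (iSup_eq_top.2 fun b hb' => ?_)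
        induction b using EReal.rec with
        | bot => exact ⟨0, bot_lt_iff_ne_bot.2 (EReal.coe_ne_bot _)⟩
        | coe y =>
            obtain ⟨m, hm⟩ := exists_nat_gt y
            exact ⟨m, EReal.coe_lt_coe_iff.2 hm⟩
        | top => exact absurd hb' (lt_irrefl _)
      · intro _ j
        rw [ht]; exact EReal.coe_lt_top _
    · -- Iinf is a real number
      set x : ℝ := Iinf.toReal with hx
      have hxe : Iinf = (x : EReal) := (EReal.coe_toReal ht hb).symm
      refine ⟨fun j => ((x - 1 / ((j : ℝ) + 1) : ℝ) : EReal), ?_, ?_, ?_, fun h => absurd h hb⟩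
      · intro a b hab
        refine EReal.coe_le_coe_iff.2 (by
          have : 1 / ((b : ℝ) + 1) ≤ 1 / ((a : ℝ) + 1) := by
            apply one_div_le_one_div_of_le
            · positivity
            · exact_mod_cast Nat.succ_le_succ hab
          linarith)
      · rw [hxe]
        refine le_of_forall_lt fun d hd => ?_
        induction d using EReal.rec with
        | bot =>
            exact lt_of_lt_of_le (bot_lt_iff_ne_bot.2 (EReal.coe_ne_bot _))
              (le_iSup (fun j : ℕ => ((x - 1 / ((j : ℝ) + 1) : ℝ) : EReal)) 0)
        | coe y =>
            have hy : y < x := EReal.coe_lt_coe_iff.1 hd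
            obtain ⟨j, hj⟩ := exists_nat_one_div_lt (sub_pos.2 hy)
            refine lt_of_lt_of_le ?_ (le_iSup (fun j : ℕ => ((x - 1 / ((j : ℝ) + 1) : ℝ) : EReal)) j)
            exact EReal.coe_lt_coe_iff.2 (by linarith)
        | top => exact absurd hd not_top_lt
      · intro _ j
        rw [hxe]
        refine EReal.coe_lt_coe_iff.2 ?_
        have : 0 < 1 / ((j : ℝ) + 1) := by positivity
        linarith
  -- the key approximation: for each k, a test sequence that is eventually good
  have key : ∀ k : ℕ, ∃ (T : ∀ n, Test n) (M : ℕ), ∀ n, M ≤ n →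
      αf n (T n) < ε + 2 / ((k : ℝ) + 1) ∧
      c k ≤ (if βf n (T n) = 0 then (⊤ : EReal)
        else ((-(1 / (n : ℝ)) * Real.log (βf n (T n)) : ℝ) : EReal)) := by
    intro k
    have h2pos : (0 : ℝ) < 2 / ((k : ℝ) + 1) := by positivity
    have h1pos : (0 : ℝ) < 1 / ((k : ℝ) + 1) := by positivity
    by_cases hb : Iinf = ⊥
    · refine ⟨fun n => (hI n).choose, 0, fun n _ => ⟨?_, ?_⟩⟩
      · rw [(hI n).choose_spec]; linarith
      · rw [hc_bot hb k]; exact bot_le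
    · have hle : Iinf ≤ B (ε + 1 / ((k : ℝ) + 1)) := by
        rw [hIinf]
        exact iInf₂_le (ε + 1 / ((k : ℝ) + 1)) (by simp [Set.mem_Ioi]; linarith)
      have h1 : c k < B (ε + 1 / ((k : ℝ) + 1)) := lt_of_lt_of_le (hc_lt hb k) hle
      rw [hB] at h1
      obtain ⟨z, ⟨T', hT'α, hz⟩, hcz⟩ := lt_sSup_iff.1 h1
      subst hz
      unfold liminfExpRate at hcz
      have hev2 : ∀ᶠ n in atTop, c k ≤ (if βf n (T' n) = 0 then (⊤ : EReal)
          else ((-(1 / (n : ℝ)) * Real.log (βf n (T' n)) : ℝ) : EReal)) :=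
        (eventually_lt_of_lt_liminf hcz).mono fun n h => le_of_lt h
      have h12 : ε + 1 / ((k : ℝ) + 1) < ε + 2 / ((k : ℝ) + 1) := by
        have hdiff : 2 / ((k : ℝ) + 1) - 1 / ((k : ℝ) + 1) = 1 / ((k : ℝ) + 1) := by ring
        linarith
      have hev1 : ∀ᶠ n in atTop, αf n (T' n) < ε + 2 / ((k : ℝ) + 1) := by
        refine eventually_lt_of_limsup_lt (lt_of_le_of_lt hT'α h12) ?_
        exact isBoundedUnder_of ⟨1, fun n => (hα n (T' n)).2⟩
      obtain ⟨M, hM⟩ := eventually_atTop.1 (hev1.and hev2)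
      exact ⟨T', M, hM⟩
  choose T M hTM using key
  -- thresholds and the diagonal index
  set Nf : ℕ → ℕ := fun k => k + (Finset.range (k + 1)).sup M with hNfdef
  have hMN : ∀ k, M k ≤ Nf k := fun k =>
    le_trans (Finset.le_sup (Finset.self_mem_range_succ k)) (Nat.le_add_left _ _)
  have hkN : ∀ k, k ≤ Nf k := fun k => Nat.le_add_right _ _
  set kk : ℕ → ℕ := fun n => Nat.findGreatest (fun k => Nf k ≤ n) n with hkkdef
  have hkk_ge : ∀ j n, Nf j ≤ n → j ≤ kk n := fun j n h =>
    Nat.le_findGreatest (le_trans (hkN j) h) h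
  have hkk_spec : ∀ n, Nf 0 ≤ n → Nf (kk n) ≤ n := fun n h =>
    Nat.findGreatest_spec (P := fun k => Nf k ≤ n) (Nat.zero_le n) h
  set Ts : ∀ n, Test n := fun n => T (kk n) n with hTsdef
  have hprop : ∀ n, Nf 0 ≤ n →
      αf n (Ts n) < ε + 2 / ((kk n : ℝ) + 1) ∧
      c (kk n) ≤ (if βf n (Ts n) = 0 then (⊤ : EReal)
        else ((-(1 / (n : ℝ)) * Real.log (βf n (Ts n)) : ℝ) : EReal)) :=
    fun n h => hTM (kk n) n (le_trans (hMN _) (hkk_spec n h))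
  -- limsup of first-kind errors at most ε
  have hαlimsup : limsup (fun n => αf n (Ts n)) atTop ≤ ε := by
    have hbound : ∀ η : ℝ, 0 < η → limsup (fun n => αf n (Ts n)) atTop ≤ ε + η := by
      intro η hη
      obtain ⟨j, hj⟩ := exists_nat_one_div_lt (half_pos hη)
      refine limsup_le_of_le (isCoboundedUnder_le_of_le _ fun n => (hα n (Ts n)).1) ?_
      filter_upwards [eventually_ge_atTop (max (Nf 0) (Nf j))] with n hn
      have h0 : Nf 0 ≤ n := le_trans (le_max_left _ _) hn
      have hjn : j ≤ kk n := hkk_ge j n (le_trans (le_max_right _ _) hn)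
      have h1 : αf n (Ts n) < ε + 2 / ((kk n : ℝ) + 1) := (hprop n h0).1
      have h2 : 2 / ((kk n : ℝ) + 1) ≤ 2 / ((j : ℝ) + 1) := by
        apply div_le_div_of_nonneg_left (by norm_num) (by positivity)
        exact_mod_cast Nat.succ_le_succ hjn
      have h3 : 2 / ((j : ℝ) + 1) < η := by
        have : 2 / ((j : ℝ) + 1) = 2 * (1 / ((j : ℝ) + 1)) := by ring
        rw [this]; linarith
      linarith
    by_contra hcon
    push_neg at hcon
    have := hbound ((limsup (fun n => αf n (Ts n)) atTop - ε) / 2) (by linarith)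
    linarith
  -- liminf rate at least Iinf
  have hrate : Iinf ≤ liminfExpRate (fun n => βf n (Ts n)) := by
    refine le_trans hc_sup (iSup_le fun j => ?_)
    unfold liminfExpRate
    refine le_liminf_of_le (by isBoundedDefault) ?_
    filter_upwards [eventually_ge_atTop (max (Nf 0) (Nf j))] with n hn
    have h0 : Nf 0 ≤ n := le_trans (le_max_left _ _) hn
    have hjn : j ≤ kk n := hkk_ge j n (le_trans (le_max_right _ _) hn)
    exact le_trans (hc_mono hjn) (hprop n h0).2
  have hmem : liminfExpRate (fun n => βf n (Ts n)) ≤ B ε := by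
    rw [hB ε]
    exact le_sSup ⟨Ts, hαlimsup, rfl⟩
  have heq1 : B ε = Iinf := le_antisymm hBle (le_trans hrate hmem)
  have heq2 : liminfExpRate (fun n => βf n (Ts n)) = B ε :=
    le_antisymm hmem (heq1 ▸ hrate)
  exact ⟨heq1, Ts, hαlimsup, heq2⟩
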